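/- Let 𝒢₀ = (G₀, m, φ, τ) be a Γ-gain framework with V₀ nonempty and X nonzero, and let T = (dτ(γ₁), …, dτ(γₙ)) be a generating tuple for the group dτ(Γ). If λ = (λ₁, …, λₙ) ∈ σ(T) is a joint eigenvalue for T with joint eigenvector a ∈ X, then the constant tuple (a, …, a) ∈ X^{V₀} lies in the kernel of the orbit matrix O_{𝒢₀}(conj(χ_λ)). In particular, the set of joint spectral points Ω_js(τ) is a nonempty subset of the RUM spectrum Ω(𝒢₀). -/

import Mathlib

universe u

/-- A finite commuting family of endomorphisms of a nonzero finite-dimensional complex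
vector space has a joint eigenvector. -/
theorem exists_joint_eigenvector :
    ∀ (n : ℕ) {M : Type u} [AddCommGroup M] [Module ℂ M] [FiniteDimensional ℂ M]
      [Nontrivial M] (f : Fin n → Module.End ℂ M),
      (∀ i j, Commute (f i) (f j)) → ∃ a : M, a ≠ 0 ∧ ∀ j, ∃ c : ℂ, f j a = c • a := by
  intro n
  induction n with
  | zero =>
    intro M _ _ _ _ f _
    obtain ⟨a, ha⟩ := exists_ne (0 : M)
    exact ⟨a, ha, fun j => j.elim0⟩
  | succ n ih =>
    intro M _ _ _ _ f hf
    obtain ⟨μ, hμ⟩ := Module.End.exists_eigenvalue (f 0)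
    set E := (f 0).eigenspace μ with hE
    have hmap : ∀ j : Fin n, Set.MapsTo (f j.succ) E E := by
      intro j x hx
      have hx' : f 0 x = μ • x := (Module.End.mem_eigenspace_iff).mp hx
      have : f 0 (f j.succ x) = μ • (f j.succ x) := by
        have hcomm := LinearMap.congr_fun (hf 0 j.succ) x
        simp only [Module.End.mul_apply] at hcomm
        rw [hcomm, hx', map_smul]
      exact (Module.End.mem_eigenspace_iff).mpr this
    let g : Fin n → Module.End ℂ E := fun j => (f j.succ).restrict (hmap j)
    have hg : ∀ i j, Commute (g i) (g j) := by
      intro i j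
      apply LinearMap.ext
      intro x
      apply Subtype.ext
      have h1 := LinearMap.congr_fun (hf i.succ j.succ) (x : M)
      simp only [Module.End.mul_apply] at h1
      simp only [Module.End.mul_apply, g, LinearMap.restrict_coe_apply]
      exact h1
    haveI : Nontrivial E := Submodule.nontrivial_iff_ne_bot.mpr hμ
    obtain ⟨a, ha, hev⟩ := ih g hg
    refine ⟨(a : M), by simpa using ha, ?_⟩
    intro j
    refine Fin.cases ?_ ?_ j
    · exact ⟨μ, (Module.End.mem_eigenspace_iff).mp a.2⟩
    · intro i
      obtain ⟨c, hc⟩ := hev i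
      refine ⟨c, ?_⟩
      have := congrArg (Subtype.val) hc
      exact this

/-- A character of the discrete abelian group `Γ`. -/
def IsChar {Γ : Type*} [AddCommGroup Γ] (χ : Γ → ℂ) : Prop :=
  (∀ γ γ' : Γ, χ (γ + γ') = χ γ * χ γ') ∧ ∀ γ : Γ, ‖χ γ‖ = 1

/-- The orbit matrix `O_{𝒢₀}(χ) : X^{V₀} → Y^{E₀}` of a `Γ`-gain framework with gain
graph data `s, r, m`, linear constraints `φ` and linear parts `U γ = dτ(γ)`:
`(O_{𝒢₀}(χ) x)_e = φ_e (x_{s e}) - χ(m_e) • φ_e (dτ(m_e) x_{r e})`. -/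
def orbitMatrix {Γ X Y V₀ E₀ : Type*} [AddCommGroup Γ]
    [NormedAddCommGroup X] [InnerProductSpace ℂ X]
    [NormedAddCommGroup Y] [Module ℂ Y]
    (s r : E₀ → V₀) (m : E₀ → Γ) (φ : E₀ → (X →ₗ[ℂ] Y)) (U : Γ → (X ≃ₗᵢ[ℂ] X))
    (χ : Γ → ℂ) (x : V₀ → X) (e : E₀) : Y :=
  φ e (x (s e)) - χ (m e) • φ e (U (m e) (x (r e)))

/-- The RUM spectrum `Ω(𝒢₀)`: the set of characters whose orbit matrix has
nontrivial kernel. -/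
def RUMspectrum {Γ X Y V₀ E₀ : Type*} [AddCommGroup Γ]
    [NormedAddCommGroup X] [InnerProductSpace ℂ X]
    [NormedAddCommGroup Y] [Module ℂ Y]
    (s r : E₀ → V₀) (m : E₀ → Γ) (φ : E₀ → (X →ₗ[ℂ] Y)) (U : Γ → (X ≃ₗᵢ[ℂ] X)) :
    Set (Γ → ℂ) :=
  {χ : Γ → ℂ | IsChar χ ∧ ∃ x : V₀ → X, x ≠ 0 ∧ ∀ e, orbitMatrix s r m φ U χ x e = 0}

/-- The set of joint spectral points `Ω_js(τ)` with respect to the generating tuple `γs`. -/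
def jointSpectralPoints {Γ : Type*} [AddCommGroup Γ]
    {X : Type*} [NormedAddCommGroup X] [InnerProductSpace ℂ X]
    (U : Γ → (X ≃ₗᵢ[ℂ] X)) {n : ℕ} (γs : Fin n → Γ) : Set (Γ → ℂ) :=
  {χ : Γ → ℂ | IsChar χ ∧
    ∃ (lam : Fin n → ℂ) (a : X), a ≠ 0 ∧ (∀ j, U (γs j) a = lam j • a) ∧
      ∀ γ, U γ a = (starRingEnd ℂ) (χ γ) • a}

/-- for a `Γ`-gain framework, if `λ ∈ σ(T)` is a joint eigenvalue of a
generating tuple `T = (dτ(γ₁), …, dτ(γₙ))` with joint eigenvector `a`, then the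
constant tuple `(a, …, a)` lies in `ker O_{𝒢₀}(conj χ_λ)`; in particular the set of
joint spectral points is a nonempty subset of the RUM spectrum. -/
theorem jointSpectralPoints_nonempty_subset_RUMspectrum
    {Γ : Type*} [AddCommGroup Γ] [AddGroup.FG Γ]
    {X : Type*} [NormedAddCommGroup X] [InnerProductSpace ℂ X] [FiniteDimensional ℂ X]
    [Nontrivial X]
    {Y : Type*} [NormedAddCommGroup Y] [InnerProductSpace ℂ Y] [FiniteDimensional ℂ Y]
    {V₀ E₀ : Type*} [Fintype V₀] [Fintype E₀] [Nonempty V₀]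
    (s r : E₀ → V₀) (m : E₀ → Γ) (φ : E₀ → (X →ₗ[ℂ] Y))
    (τ : Γ → (X ≃ᵃⁱ[ℂ] X))
    (hτ : ∀ γ γ' : Γ, ∀ x : X, τ (γ + γ') x = τ γ (τ γ' x))
    (U : Γ → (X ≃ₗᵢ[ℂ] X)) (hU : ∀ γ x, U γ x = τ γ x - τ γ 0)
    {n : ℕ} (γs : Fin n → Γ)
    (hgen : ∀ γ : Γ, U γ ∈ Subgroup.closure (Set.range fun j => U (γs j))) :
    (∀ (lam : Fin n → ℂ) (a : X) (χlam : Γ → ℂ),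
        a ≠ 0 → (∀ j, U (γs j) a = lam j • a) →
        IsChar χlam → (∀ γ, U γ a = χlam γ • a) →
        ∀ e, orbitMatrix s r m φ U (fun γ => (starRingEnd ℂ) (χlam γ))
              (fun _ : V₀ => a) e = 0) ∧
      (jointSpectralPoints U γs).Nonempty ∧
      jointSpectralPoints U γs ⊆ RUMspectrum s r m φ U := by
  classical
  -- `U` is multiplicative on applications
  have hmul : ∀ γ γ' : Γ, ∀ x : X, U (γ + γ') x = U γ (U γ' x) := by
    intro γ γ' x
    rw [hU, hτ, hτ]
    rw [hU γ' x, map_sub, hU γ (τ γ' x), hU γ (τ γ' 0)]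
    abel
  -- the generic orbit-matrix computation
  have key : ∀ (χ : Γ → ℂ), (∀ γ, ‖χ γ‖ = 1) → ∀ (a : X), (∀ γ, U γ a = χ γ • a) →
      ∀ e, orbitMatrix s r m φ U (fun γ => (starRingEnd ℂ) (χ γ)) (fun _ : V₀ => a) e = 0 := by
    intro χ hnorm a heig e
    have h1 : (starRingEnd ℂ) (χ (m e)) * χ (m e) = 1 := by
      have h2 : Complex.normSq (χ (m e)) = 1 := by
        rw [← Complex.sq_norm, hnorm (m e)]; norm_num
      rw [mul_comm, Complex.mul_conj, h2]; norm_num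
    simp only [orbitMatrix, heig (m e), map_smul, smul_smul, h1, one_smul, sub_self]
  refine ⟨fun lam a χlam ha _ hchar heig e => key χlam hchar.2 a heig e, ?_, ?_⟩
  · -- nonemptiness: produce a joint eigenvector
    have hcomm : ∀ i j : Fin n, Commute ((U (γs i)).toLinearEquiv.toLinearMap)
        ((U (γs j)).toLinearEquiv.toLinearMap) := by
      intro i j
      apply LinearMap.ext
      intro x
      simp only [Module.End.mul_apply, LinearEquiv.coe_coe,
        LinearIsometryEquiv.coe_toLinearEquiv]
      rw [← hmul, ← hmul, add_comm]
    obtain ⟨a, ha, hev⟩ := exists_joint_eigenvector n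
      (fun j => (U (γs j)).toLinearEquiv.toLinearMap) hcomm
    simp only [LinearEquiv.coe_coe, LinearIsometryEquiv.coe_toLinearEquiv] at hev
    -- the subgroup of isometries having `a` as eigenvector
    have haS : ∀ γ : Γ, ∃ c : ℂ, U γ a = c • a := by
      let S : Subgroup (X ≃ₗᵢ[ℂ] X) :=
        { carrier := {g | ∃ c : ℂ, g a = c • a}
          mul_mem' := by
            rintro g h ⟨c, hc⟩ ⟨d, hd⟩
            exact ⟨c * d, by
              simp only [LinearIsometryEquiv.coe_mul, Function.comp_apply, hd, map_smul, hc,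
                smul_smul, mul_comm]⟩
          one_mem' := ⟨1, by simp⟩
          inv_mem' := by
            rintro g ⟨c, hc⟩
            have hc0 : c ≠ 0 := by
              rintro rfl
              rw [zero_smul] at hc
              exact ha (by simpa using congrArg g.symm hc)
            refine ⟨c⁻¹, ?_⟩
            have h2 : a = c • g.symm a := by
              conv_lhs => rw [← g.symm_apply_apply a, hc, map_smul]
            rw [LinearIsometryEquiv.coe_inv]
            conv_rhs => rw [h2]
            rw [smul_smul, inv_mul_cancel₀ hc0, one_smul] }
      intro γ
      have : U γ ∈ S := by
        refine (Subgroup.closure_le S).mpr ?_ (hgen γ)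
        rintro - ⟨j, rfl⟩
        exact hev j
      exact this
    choose χ0 hχ0 using haS
    have uniq : ∀ c d : ℂ, c • a = d • a → c = d := by
      intro c d h
      exact smul_left_injective ℂ ha h
    have hnorm : ∀ γ, ‖χ0 γ‖ = 1 := by
      intro γ
      have h1 : ‖a‖ = ‖χ0 γ‖ * ‖a‖ := by
        rw [← norm_smul, ← hχ0 γ, LinearIsometryEquiv.norm_map]
      have h2 : ‖a‖ ≠ 0 := norm_ne_zero_iff.mpr ha
      have h3 : ‖χ0 γ‖ * ‖a‖ = 1 * ‖a‖ := by rw [one_mul, ← h1]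
      exact mul_right_cancel₀ h2 h3
    have hcharχ0 : IsChar χ0 := by
      refine ⟨fun γ γ' => ?_, hnorm⟩
      apply uniq
      rw [← hχ0 (γ + γ'), hmul, hχ0 γ', map_smul, hχ0 γ, smul_smul,
        mul_comm (χ0 γ') (χ0 γ)]
    refine ⟨fun γ => (starRingEnd ℂ) (χ0 γ), ?_, fun j => χ0 (γs j), a, ha,
      fun j => hχ0 (γs j), fun γ => ?_⟩
    · exact ⟨fun γ γ' => by simp only [hcharχ0.1 γ γ', map_mul], fun γ => by
        simp only [RCLike.norm_conj]; exact hnorm γ⟩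
    · rw [Complex.conj_conj]; exact hχ0 γ
  · -- subset
    rintro χ ⟨hchar, lam, a, ha, -, heig⟩
    refine ⟨hchar, fun _ : V₀ => a, ?_, ?_⟩
    · intro h0
      exact ha (congrFun h0 (Classical.arbitrary V₀))
    · have hχ' : ∀ γ, ‖(starRingEnd ℂ) (χ γ)‖ = 1 := fun γ => by
        rw [RCLike.norm_conj]; exact hchar.2 γ
      have := key (fun γ => (starRingEnd ℂ) (χ γ)) hχ' a heig
      have hfun : (fun γ => (starRingEnd ℂ) ((starRingEnd ℂ) (χ γ))) = χ :=
        funext fun γ => Complex.conj_conj _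
      rwa [hfun] at this
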